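/- Let K ⊆ L be an extension of fields with [L : K] = 2. Then the polynomial composite K + X·L[X] is a Noetherian ring. Moreover, if the fixed field of the automorphism group G(L|K) = Aut_K(L) equals K, then L is a normal extension of K. -/

import Mathlib

/-- The polynomial composite `A + X·B[X]`: the subring of `B[X]` of polynomials
whose constant coefficient lies in `A`. -/
def Subring.composite {B : Type*} [CommRing B] (A : Subring B) : Subring (Polynomial B) where
  carrier := {f : Polynomial B | f.coeff 0 ∈ A}
  mul_mem' {f g} hf hg := by
    simp only [Set.mem_setOf_eq, Polynomial.mul_coeff_zero] at *
    exact mul_mem hf hg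
  one_mem' := by
    simp only [Set.mem_setOf_eq, Polynomial.coeff_one_zero]
    exact one_mem A
  add_mem' {f g} hf hg := by
    simp only [Set.mem_setOf_eq, Polynomial.coeff_add] at *
    exact add_mem hf hg
  zero_mem' := by
    simp only [Set.mem_setOf_eq, Polynomial.coeff_zero]
    exact zero_mem A
  neg_mem' {f} hf := by
    simp only [Set.mem_setOf_eq, Polynomial.coeff_neg] at *
    exact neg_mem hf

theorem Subring.mem_composite {B : Type*} [CommRing B] (A : Subring B) (f : Polynomial B) :
    f ∈ A.composite ↔ f.coeff 0 ∈ A := Iff.rfl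

/-- The composite `K + X·L[X]` as a `K`-subalgebra of `L[X]`. -/
def compositeSubalgebra (K L : Type*) [Field K] [Field L] [Algebra K L] :
    Subalgebra K (Polynomial L) where
  toSubsemiring := ((algebraMap K L).range.composite).toSubsemiring
  algebraMap_mem' k := by
    show ((algebraMap K (Polynomial L)) k).coeff 0 ∈ (algebraMap K L).range
    rw [Polynomial.algebraMap_apply, Polynomial.coeff_C_zero]
    exact ⟨k, rfl⟩

open Polynomial in
theorem compositeSubalgebra_fg (K L : Type*) [Field K] [Field L] [Algebra K L]
    [FiniteDimensional K L] : (compositeSubalgebra K L).FG := by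
  classical
  let b := Module.finBasis K L
  refine ⟨insert (X : Polynomial L) (Finset.image (fun i => (X : Polynomial L) * C (b i)) Finset.univ), ?_⟩
  apply le_antisymm
  · apply Algebra.adjoin_le
    intro f hf
    simp only [Finset.coe_insert, Finset.coe_image, Set.mem_insert_iff, Set.mem_image] at hf
    rcases hf with rfl | ⟨i, _, rfl⟩
    · show (X : Polynomial L).coeff 0 ∈ (algebraMap K L).range
      simp only [coeff_X_zero]
      exact zero_mem _
    · show ((X : Polynomial L) * C (b i)).coeff 0 ∈ (algebraMap K L).range
      simp only [mul_coeff_zero, coeff_X_zero, zero_mul]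
      exact zero_mem _
  · -- every element of the composite lies in the adjoin
    set T : Set (Polynomial L) :=
      ((insert (X : Polynomial L) (Finset.image (fun i => (X : Polynomial L) * C (b i)) Finset.univ) : Finset (Polynomial L)) : Set (Polynomial L))
    have hX : (X : Polynomial L) ∈ Algebra.adjoin K T :=
      Algebra.subset_adjoin (by simp [T])
    have hXC : ∀ l : L, (X : Polynomial L) * C l ∈ Algebra.adjoin K T := by
      intro l
      have hl : l ∈ Submodule.span K (Set.range b) := by
        rw [b.span_eq]; trivial
      refine Submodule.span_induction ?_ ?_ ?_ ?_ hl
      · rintro y ⟨i, rfl⟩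
        exact Algebra.subset_adjoin (by simp [T])
      · simp only [map_zero, mul_zero]
        exact zero_mem _
      · intro y z _ _ hy hz
        rw [map_add, mul_add]
        exact add_mem hy hz
      · intro k y _ hy
        have : (X : Polynomial L) * C (k • y) = k • ((X : Polynomial L) * C y) := by
          rw [Algebra.smul_def, Algebra.smul_def, Polynomial.algebraMap_apply, map_mul]
          ring
        rw [this]
        exact Subalgebra.smul_mem _ hy k
    have hXg : ∀ g : Polynomial L, (X : Polynomial L) * g ∈ Algebra.adjoin K T := by
      intro g
      induction g using Polynomial.induction_on' with
      | add p q hp hq => rw [mul_add]; exact add_mem hp hq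
      | monomial n a =>
          have : (X : Polynomial L) * monomial n a = ((X : Polynomial L) * C a) * X ^ n := by
            rw [← C_mul_X_pow_eq_monomial]; ring
          rw [this]
          exact mul_mem (hXC a) (pow_mem hX n)
    intro f hf
    obtain ⟨k, hk⟩ := hf
    have hdecomp : f = X * f.divX + C (f.coeff 0) := (X_mul_divX_add f).symm
    rw [hdecomp, ← hk]
    exact add_mem (hXg f.divX)
      (by rw [← Polynomial.algebraMap_apply]; exact Subalgebra.algebraMap_mem _ k)

/-- For an extension of fields `K ⊆ L` with `[L : K] = 2`, the composite `K + X·L[X]` is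
Noetherian; moreover, if the fixed field of `G(L|K) = Aut_K(L)` is `K`, then `L` is a normal
extension of `K`. -/
theorem composite_quadratic (K L : Type*) [Field K] [Field L] [Algebra K L]
    (hdeg : Module.finrank K L = 2) :
    IsNoetherianRing ((algebraMap K L).range.composite) ∧
      ((∀ x : L, (∀ σ : L ≃ₐ[K] L, σ x = x) → ∃ k : K, algebraMap K L k = x) →
        Normal K L) := by
  have hfd : FiniteDimensional K L := FiniteDimensional.of_finrank_eq_succ hdeg
  constructor
  · -- Noetherian
    have hfg := compositeSubalgebra_fg K L
    have hft : Algebra.FiniteType K (compositeSubalgebra K L) :=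
      (Subalgebra.fg_iff_finiteType _).mp hfg
    have hnoe : IsNoetherianRing (compositeSubalgebra K L) :=
      Algebra.FiniteType.isNoetherianRing K _
    have heq : (algebraMap K L).range.composite = (compositeSubalgebra K L).toSubring := by
      ext f; rfl
    rw [heq]
    exact hnoe
  · -- Normal
    intro _
    rw [normal_iff]
    intro x
    have hint : IsIntegral K x := Algebra.IsIntegral.isIntegral x
    refine ⟨hint, ?_⟩
    have hdvd : (minpoly K x).natDegree ∣ 2 := hdeg ▸ minpoly.degree_dvd hint
    have hne : minpoly K x ≠ 0 := minpoly.ne_zero hint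
    rcases (Nat.le_of_dvd two_pos hdvd).lt_or_eq with hlt | heq2
    · exact Polynomial.Splits.of_natDegree_le_one (by rw [Polynomial.natDegree_map]; exact Nat.lt_succ_iff.mp hlt)
    · show Polynomial.Splits ((minpoly K x).map (algebraMap K L))
      set p := (minpoly K x).map (algebraMap K L) with hp
      have hroot : p.IsRoot x := by
        rw [hp, Polynomial.IsRoot, Polynomial.eval_map, ← Polynomial.aeval_def, minpoly.aeval]
      have hkey : (Polynomial.X - Polynomial.C x) * (p /ₘ (Polynomial.X - Polynomial.C x)) = p :=
        Polynomial.mul_divByMonic_eq_iff_isRoot.mpr hroot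
      rw [← hkey]
      refine (Polynomial.Splits.X_sub_C _).mul ?_
      apply Polynomial.Splits.of_natDegree_le_one
      have hpne : p ≠ 0 := Polynomial.map_ne_zero hne
      have hpdeg : p.natDegree = 2 := by
        rw [hp, Polynomial.natDegree_map, heq2]
      have hqne : p /ₘ (Polynomial.X - Polynomial.C x) ≠ 0 := by
        intro h; rw [h, mul_zero] at hkey; exact hpne hkey.symm
      have := Polynomial.natDegree_mul (p := Polynomial.X - Polynomial.C x)
        (q := p /ₘ (Polynomial.X - Polynomial.C x)) (Polynomial.X_sub_C_ne_zero x) hqne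
      rw [hkey, hpdeg, Polynomial.natDegree_X_sub_C] at this
      omega
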